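/- arXiv:0811.1607 — 5 statements merged into one kernel-verified Lean document; each statement's English description precedes it below -/
import Mathlib

section
/- Let k ≥ 1 and let G be a group that can be generated by k elements. Then the following are equivalent: (i) there exists an integer N such that for every generating tuple (a₁,…,a_k) of G there is a non-trivial element w of the free group F_k with |w| ≤ N and w(a₁,…,a_k) = 1 in G (i.e. the girth of G with respect to every k-element generating set is uniformly bounded); (ii) there exists a non-trivial element u of F_k such that u(a₁,…,a_k) = 1 in G for every generating tuple (a₁,…,a_k) of G (i.e. G satisfies a non-trivial k-almost identity). -/
open Subgroup

/-- A free group is torsion-free: nontrivial elements have nontrivial zpowers. -/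
lemma freeGroup_zpow_ne_one {α : Type} (x : FreeGroup α) (hx : x ≠ 1) {n : ℤ} (hn : n ≠ 0) :
    x ^ n ≠ 1 := by
  intro h
  have hfin : IsOfFinOrder x := by
    refine isOfFinOrder_iff_pow_eq_one.2 ⟨n.natAbs, Int.natAbs_pos.2 hn, ?_⟩
    rcases Int.natAbs_eq n with he | he
    · rw [← zpow_natCast, ← he, h]
    · rw [← zpow_natCast, ← neg_neg (n.natAbs : ℤ), ← he, zpow_neg, h, inv_one]
  have hfin2 : Finite (Subgroup.zpowers x) := hfin.finite_zpowers
  set H := Subgroup.zpowers x with hH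
  haveI : Finite H := hfin2
  let ι := IsFreeGroup.Generators H
  let e : H ≃* FreeGroup ι := IsFreeGroup.toFreeGroup H
  haveI : Finite (FreeGroup ι) := Finite.of_equiv H e.toEquiv
  rcases isEmpty_or_nonempty ι with hι | ⟨⟨i₀⟩⟩
  · -- FreeGroup over empty type is subsingleton, so x = 1
    have hsub : ∀ y : FreeGroup ι, y = 1 := by
      intro y
      rw [← FreeGroup.toWord_eq_nil_iff]
      cases hyw : y.toWord with
      | nil => rfl
      | cons a l => exact (hι.false a.1).elim
    have : (⟨x, Subgroup.mem_zpowers x⟩ : H) = 1 := by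
      have := hsub (e ⟨x, Subgroup.mem_zpowers x⟩)
      calc (⟨x, Subgroup.mem_zpowers x⟩ : H) = e.symm (e ⟨x, Subgroup.mem_zpowers x⟩) := by
            rw [MulEquiv.symm_apply_apply]
        _ = e.symm 1 := by rw [this]
        _ = 1 := map_one _
    exact hx (congrArg Subtype.val this)
  · -- FreeGroup over nonempty type is infinite
    have hinj : Function.Injective (fun m : ℤ => (FreeGroup.of i₀ : FreeGroup ι) ^ m) := by
      intro a b hab
      have hφ := congrArg (FreeGroup.lift (fun _ : ι => (Multiplicative.ofAdd (1 : ℤ)))) hab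
      simp only [map_zpow, FreeGroup.lift_apply_of] at hφ
      simpa using congrArg Multiplicative.toAdd hφ
    haveI : Finite ℤ := Finite.of_injective _ hinj
    exact not_finite ℤ

/-- Commuting elements of a free group are powers of a common element. -/
lemma freeGroup_commute_common {α : Type} (x y : FreeGroup α) (h : Commute x y) :
    ∃ z : FreeGroup α, (∃ m : ℤ, z ^ m = x) ∧ (∃ n : ℤ, z ^ n = y) := by
  set H := Subgroup.closure ({x, y} : Set (FreeGroup α)) with hH
  have hxH : x ∈ H := Subgroup.subset_closure (by simp)
  have hyH : y ∈ H := Subgroup.subset_closure (by simp)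
  -- H is commutative
  have hc1 : ∀ s ∈ ({x, y} : Set (FreeGroup α)), ∀ a ∈ H, Commute s a := by
    intro s hs a ha
    simp only [Set.mem_insert_iff, Set.mem_singleton_iff] at hs
    induction ha using Subgroup.closure_induction with
    | mem t ht =>
      have ht' : t = x ∨ t = y := by simpa using ht
      rcases hs with hs | hs <;> rcases ht' with ht' | ht' <;> subst hs <;> subst ht' <;>
        first
          | exact Commute.refl _
          | exact h
          | exact h.symm
    | one => exact Commute.one_right _
    | mul a b _ _ ha hb => exact Commute.mul_right ha hb
    | inv a _ ha => exact Commute.inv_right ha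
  have hcomm : ∀ a b : H, a * b = b * a := by
    rintro ⟨a, ha⟩ ⟨b, hb⟩
    have : Commute a b := by
      induction ha using Subgroup.closure_induction with
      | mem t ht => exact hc1 t ht b hb
      | one => exact Commute.one_left _
      | mul a' b' _ _ ha' hb' => exact Commute.mul_left ha' hb'
      | inv a' _ ha' => exact Commute.inv_left ha'
    exact Subtype.ext this
  -- H is free, commutative free groups are cyclic
  let ι := IsFreeGroup.Generators H
  let e : H ≃* FreeGroup ι := IsFreeGroup.toFreeGroup H
  have hιsub : ∀ i j : ι, i = j := by
    by_contra hne
    push_neg at hne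
    obtain ⟨i, j, hij⟩ := hne
    classical
    let c1 : Equiv.Perm (Fin 3) := Equiv.swap 0 1
    let c2 : Equiv.Perm (Fin 3) := Equiv.swap 1 2
    let f : H →* Equiv.Perm (Fin 3) :=
      IsFreeGroup.lift (fun t => if t = i then c1 else if t = j then c2 else 1)
    have h1 : f (IsFreeGroup.of i) = c1 := by rw [IsFreeGroup.lift_of]; simp
    have h2 : f (IsFreeGroup.of j) = c2 := by
      rw [IsFreeGroup.lift_of]; simp [hij, Ne.symm hij]
    have hcij := hcomm (IsFreeGroup.of i) (IsFreeGroup.of j)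
    have : c1 * c2 = c2 * c1 := by
      rw [← h1, ← h2, ← map_mul, ← map_mul, hcij]
    exact absurd this (by decide)
  -- so ι is a subsingleton; H is cyclic
  have hcyc : ∃ z : H, ∀ a : H, ∃ m : ℤ, z ^ m = a := by
    rcases isEmpty_or_nonempty ι with hι | ⟨⟨i₀⟩⟩
    · refine ⟨1, fun a => ⟨0, ?_⟩⟩
      have hsub : ∀ v : FreeGroup ι, v = 1 := by
        intro v
        rw [← FreeGroup.toWord_eq_nil_iff]
        cases hvw : v.toWord with
        | nil => rfl
        | cons c l => exact (hι.false c.1).elim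
      have : e a = 1 := hsub _
      have := congrArg e.symm this
      rw [MulEquiv.symm_apply_apply] at this
      rw [this, map_one, zpow_zero]
    · refine ⟨e.symm (FreeGroup.of i₀), fun a => ?_⟩
      have hall : ∀ v : FreeGroup ι, v ∈ Subgroup.zpowers (FreeGroup.of i₀) := by
        intro v
        induction v using FreeGroup.induction_on with
        | C1 => exact one_mem _
        | of t => 
          have : t = i₀ := hιsub t i₀
          rw [this]; exact Subgroup.mem_zpowers _
        | inv_of t ht => exact inv_mem ht
        | mul u v hu hv => exact mul_mem hu hv
      obtain ⟨m, hm⟩ := hall (e a)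
      refine ⟨m, ?_⟩
      have h2 : e.symm (FreeGroup.of i₀ ^ m) = a := by
        simpa using congrArg e.symm hm
      rw [map_zpow] at h2
      exact h2
  obtain ⟨z, hz⟩ := hcyc
  obtain ⟨m, hm⟩ := hz ⟨x, hxH⟩
  obtain ⟨n, hn⟩ := hz ⟨y, hyH⟩
  exact ⟨(z : FreeGroup α), ⟨m, by rw [← SubgroupClass.coe_zpow, hm]⟩,
    ⟨n, by rw [← SubgroupClass.coe_zpow, hn]⟩⟩

/-- Normal closures of two nontrivial elements of a free group intersect nontrivially. -/
lemma freeGroup_normalClosure_pair {α : Type} (u w : FreeGroup α) (hu : u ≠ 1) (hw : w ≠ 1) :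
    ∃ v : FreeGroup α, v ≠ 1 ∧ v ∈ Subgroup.normalClosure {u} ∧
      v ∈ Subgroup.normalClosure {w} := by
  have huN : u ∈ Subgroup.normalClosure ({u} : Set (FreeGroup α)) :=
    Subgroup.subset_normalClosure rfl
  have hwN : w ∈ Subgroup.normalClosure ({w} : Set (FreeGroup α)) :=
    Subgroup.subset_normalClosure rfl
  by_cases hc : Commute u w
  · obtain ⟨z, ⟨m, hm⟩, ⟨n, hn⟩⟩ := freeGroup_commute_common u w hc
    have hm0 : m ≠ 0 := by rintro rfl; simp at hm; exact hu hm.symm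
    have hn0 : n ≠ 0 := by rintro rfl; simp at hn; exact hw hn.symm
    have hz1 : z ≠ 1 := by rintro rfl; simp at hm; exact hu hm.symm
    refine ⟨z ^ (m * n), freeGroup_zpow_ne_one z hz1 (mul_ne_zero hm0 hn0), ?_, ?_⟩
    · have : z ^ (m * n) = u ^ n := by rw [zpow_mul, hm]
      rw [this]; exact zpow_mem huN n
    · have : z ^ (m * n) = w ^ m := by rw [mul_comm, zpow_mul, hn]
      rw [this]; exact zpow_mem hwN m
  · refine ⟨u * w * u⁻¹ * w⁻¹, ?_, ?_, ?_⟩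
    · intro h
      rw [mul_inv_eq_one, mul_inv_eq_iff_eq_mul] at h
      exact hc h
    · have e1 : u * w * u⁻¹ * w⁻¹ = u * (w * u⁻¹ * w⁻¹) := by group
      rw [e1]
      exact mul_mem huN (Subgroup.normalClosure_normal.conj_mem _ (inv_mem huN) w)
    · exact mul_mem (Subgroup.normalClosure_normal.conj_mem _ hwN u) (inv_mem hwN)

/-- A nontrivial element in the intersection of the normal closures of a finite set of
nontrivial elements of a free group. -/
lemma freeGroup_normalClosure_finset {k : ℕ} (hk : 1 ≤ k)
    (S : Finset (FreeGroup (Fin k))) (hS : (1 : FreeGroup (Fin k)) ∉ S) :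
    ∃ v : FreeGroup (Fin k), v ≠ 1 ∧ ∀ w ∈ S, v ∈ Subgroup.normalClosure {w} := by
  classical
  revert hS
  induction S using Finset.induction_on with
  | empty =>
    exact fun _ => ⟨FreeGroup.of ⟨0, hk⟩, FreeGroup.of_ne_one _, fun w hw => absurd hw (by simp)⟩
  | @insert a S ha ih =>
    intro hS'
    have h1S : (1 : FreeGroup (Fin k)) ∉ S := fun h => hS' (Finset.mem_insert_of_mem h)
    have ha1 : a ≠ 1 := fun h => hS' (by rw [← h] at *; exact Finset.mem_insert_self a S)
    obtain ⟨v', hv1, hv2⟩ := ih h1S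
    obtain ⟨v, hvne, hvN1, hvN2⟩ := freeGroup_normalClosure_pair v' a hv1 ha1
    refine ⟨v, hvne, fun w hw => ?_⟩
    rcases Finset.mem_insert.1 hw with rfl | hwS
    · exact hvN2
    · exact Subgroup.normalClosure_le_normal (Set.singleton_subset_iff.2 (hv2 w hwS)) hvN1

/-- Let `k ≥ 1` and let `G` be a group generated by `k` elements. Then the girth of `G` is
uniformly bounded over all `k`-element generating sets (i): there is `N` such that every
generating `k`-tuple satisfies a non-trivial relation of length at most `N`, if and only if
(ii) `G` satisfies a non-trivial `k`-almost identity: some non-trivial `u ∈ F_k` vanishes on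
every generating `k`-tuple of `G`. -/
theorem girth_bounded_iff_almost_identity (k : ℕ) (hk : 1 ≤ k) (G : Type) [Group G]
    (hgen : ∃ a : Fin k → G, Subgroup.closure (Set.range a) = ⊤) :
    (∃ N : ℕ, ∀ a : Fin k → G, Subgroup.closure (Set.range a) = ⊤ →
        ∃ w : FreeGroup (Fin k), w ≠ 1 ∧ w.toWord.length ≤ N ∧ FreeGroup.lift a w = 1)
      ↔ (∃ u : FreeGroup (Fin k), u ≠ 1 ∧ ∀ a : Fin k → G,
          Subgroup.closure (Set.range a) = ⊤ → FreeGroup.lift a u = 1) := by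
  constructor
  · rintro ⟨N, hN⟩
    classical
    have hfin : {w : FreeGroup (Fin k) | w ≠ 1 ∧ w.toWord.length ≤ N}.Finite := by
      have h1 : {w : FreeGroup (Fin k) | w.toWord.length ≤ N}.Finite := by
        have := List.finite_length_le (Fin k × Bool) N
        exact Set.Finite.preimage (FreeGroup.toWord_injective.injOn) this
      exact h1.subset (fun w hw => hw.2)
    set S := hfin.toFinset with hSdef
    have h1S : (1 : FreeGroup (Fin k)) ∉ S := by
      rw [hSdef, Set.Finite.mem_toFinset]
      intro h; exact h.1 rfl
    obtain ⟨v, hvne, hv⟩ := freeGroup_normalClosure_finset hk S h1S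
    refine ⟨v, hvne, fun a ha => ?_⟩
    obtain ⟨w, hw1, hwlen, hwker⟩ := hN a ha
    have hwS : w ∈ S := by rw [hSdef, Set.Finite.mem_toFinset]; exact ⟨hw1, hwlen⟩
    have hle : Subgroup.normalClosure {w} ≤ (FreeGroup.lift a).ker :=
      Subgroup.normalClosure_le_normal (Set.singleton_subset_iff.2 hwker)
    exact hle (hv w hwS)
  · rintro ⟨u, hu, hall⟩
    exact ⟨u.toWord.length, fun a ha => ⟨u, hu, le_refl _, hall a ha⟩⟩
end

section
/- In the quaternion group Q₈ of order 8: for every pair of elements (a,b) that generates Q₈ one has a²b² = 1 (so x₁²x₂² is a 2-almost identity of Q₈); however, x₁²x₂² is not an identity of Q₈, i.e. there exist elements a, b ∈ Q₈ with a²b² ≠ 1. -/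
private lemma q8_sq (x : QuaternionGroup 2) :
    x ^ 2 = 1 ∨ x ^ 2 = QuaternionGroup.a 2 := by revert x; decide

private lemma q8_sq_one (x : QuaternionGroup 2) (h : x ^ 2 = 1) :
    x = 1 ∨ x = QuaternionGroup.a 2 := by revert h; revert x; decide

private lemma q8_pow4 (x : QuaternionGroup 2) : x ^ 4 = 1 := by revert x; decide

private lemma q8_not_cyclic (c : QuaternionGroup 2) :
    Subgroup.zpowers c ≠ ⊤ := by
  intro hc
  have h1 : orderOf c = 8 := by
    rw [← Nat.card_zpowers, hc, Subgroup.card_top, Nat.card_eq_fintype_card]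
    rfl
  have h2 : orderOf c ∣ 4 := orderOf_dvd_of_pow_eq_one (q8_pow4 c)
  rw [h1] at h2
  omega

private lemma q8_key (a b : QuaternionGroup 2) (hne : a ^ 2 * b ^ 2 ≠ 1)
    (hab : Subgroup.closure {a, b} = (⊤ : Subgroup (QuaternionGroup 2))) : False := by
  rcases q8_sq a with ha | ha <;> rcases q8_sq b with hb | hb
  · exact hne (by rw [ha, hb, one_mul])
  · refine q8_not_cyclic b (le_antisymm le_top ?_)
    rw [← hab, Subgroup.closure_le]
    intro x hx
    rcases hx with rfl | rfl
    · rcases q8_sq_one x ha with rfl | h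
      · exact Subgroup.one_mem _
      · rw [h, ← hb]; exact Subgroup.pow_mem _ (Subgroup.mem_zpowers b) 2
    · exact Subgroup.mem_zpowers x
  · refine q8_not_cyclic a (le_antisymm le_top ?_)
    rw [← hab, Subgroup.closure_le]
    intro x hx
    rcases hx with rfl | rfl
    · exact Subgroup.mem_zpowers x
    · rcases q8_sq_one x hb with rfl | h
      · exact Subgroup.one_mem _
      · rw [h, ← ha]; exact Subgroup.pow_mem _ (Subgroup.mem_zpowers a) 2
  · refine hne ?_
    rw [ha, hb]
    decide

/-- In the quaternion group `Q₈` of order 8: for every generating pair `(a, b)` one has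
`a²b² = 1` (so `x₁²x₂²` is a 2-almost identity of `Q₈`); however, `x₁²x₂²` is not an
identity of `Q₈`: there exist `a, b ∈ Q₈` with `a²b² ≠ 1`. -/
theorem quaternion_almost_identity :
    (∀ a b : QuaternionGroup 2, Subgroup.closure {a, b} = ⊤ → a ^ 2 * b ^ 2 = 1) ∧
      ∃ a b : QuaternionGroup 2, a ^ 2 * b ^ 2 ≠ 1 := by
  refine ⟨fun a b hab => ?_, ⟨QuaternionGroup.a 1, 1, by decide⟩⟩
  by_contra hne
  exact q8_key a b hne hab
end

section
/- In the symmetric group S₃ on 3 letters: for every pair of elements (a,b) that generates S₃ one has a²ba²b⁻¹ = 1 (so x₁²x₂x₁²x₂⁻¹ is a 2-almost identity of S₃); however, x₁²x₂x₁²x₂⁻¹ is not an identity of S₃, i.e. there exist elements a, b ∈ S₃ with a²ba²b⁻¹ ≠ 1. -/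
set_option maxRecDepth 20000 in
private lemma key_aux : ∀ a b : Equiv.Perm (Fin 3), a ^ 2 * b * a ^ 2 * b⁻¹ ≠ 1 →
    Equiv.Perm.sign a = 1 ∧ Equiv.Perm.sign b = 1 := by decide

/-- In the symmetric group `S₃` on 3 letters: for every generating pair `(a, b)` one has
`a²ba²b⁻¹ = 1` (so `x₁²x₂x₁²x₂⁻¹` is a 2-almost identity of `S₃`); however, it is not an
identity of `S₃`: there exist `a, b ∈ S₃` with `a²ba²b⁻¹ ≠ 1`. -/
theorem symmetric_group_almost_identity :
    (∀ a b : Equiv.Perm (Fin 3), Subgroup.closure {a, b} = ⊤ →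
        a ^ 2 * b * a ^ 2 * b⁻¹ = 1) ∧
      ∃ a b : Equiv.Perm (Fin 3), a ^ 2 * b * a ^ 2 * b⁻¹ ≠ 1 := by
  constructor
  · intro a b hgen
    by_contra hne
    obtain ⟨ha, hb⟩ := key_aux a b hne
    have hsub : Subgroup.closure {a, b} ≤ alternatingGroup (Fin 3) := by
      rw [Subgroup.closure_le]
      intro x hx
      rcases hx with h | h <;> simp_all [Equiv.Perm.mem_alternatingGroup]
    rw [hgen] at hsub
    have : Equiv.swap (0 : Fin 3) 1 ∈ alternatingGroup (Fin 3) :=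
      hsub (Subgroup.mem_top _)
    rw [Equiv.Perm.mem_alternatingGroup] at this
    revert this
    decide
  · exact ⟨Equiv.swap 0 1 * Equiv.swap 0 2, 1, by decide⟩
end

section
/- Let n > 1 be an integer and let G = F₂/ⁿF₂. Then for every k ≥ 1 and every tuple (g₁,…,g_k) of elements of G that generates G, there exists an index i such that gᵢⁿ = 1 in G. Consequently, the girth of G with respect to every finite generating set is at most n: for every generating tuple there is a non-trivial word w of length at most n in the free group F_k with w(g₁,…,g_k) = 1. -/
/-- The exponent sum of the generator `i` in a word of the free group `F₂ = F(a,b)`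
(we take `a` = `FreeGroup.of 0`, `b` = `FreeGroup.of 1`). -/
def expSum (i : Fin 2) : FreeGroup (Fin 2) →* Multiplicative ℤ :=
  FreeGroup.lift (fun j => Multiplicative.ofAdd (if j = i then (1 : ℤ) else 0))

/-- The set of all `n`-th powers `wⁿ` of elements `w ∈ F₂` such that the exponent sum of `a`
in `w` or the exponent sum of `b` in `w` is not divisible by `n`. -/
def nPowSet (n : ℕ) : Set (FreeGroup (Fin 2)) :=
  {x | ∃ w : FreeGroup (Fin 2),
    (¬ (n : ℤ) ∣ (expSum 0 w).toAdd ∨ ¬ (n : ℤ) ∣ (expSum 1 w).toAdd) ∧ x = w ^ n}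

/-- `ⁿF₂`: the subgroup of `F₂` generated by `nPowSet n`. -/
def nF2 (n : ℕ) : Subgroup (FreeGroup (Fin 2)) := Subgroup.closure (nPowSet n)

lemma expSum_conj (i : Fin 2) (g w : FreeGroup (Fin 2)) :
    expSum i (g * w * g⁻¹) = expSum i w := by
  rw [map_mul, map_mul, map_inv, mul_comm ((expSum i) g), mul_inv_cancel_right]

lemma conjugatesOfSet_nPowSet (n : ℕ) :
    Group.conjugatesOfSet (nPowSet n) = nPowSet n := by
  refine Set.Subset.antisymm ?_ Group.subset_conjugatesOfSet
  intro x hx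
  rw [Group.mem_conjugatesOfSet_iff] at hx
  obtain ⟨a, ⟨w, hw, rfl⟩, hconj⟩ := hx
  obtain ⟨c, rfl⟩ := isConj_iff.1 hconj
  exact ⟨c * w * c⁻¹, by simpa [expSum_conj] using hw, (conj_pow).symm⟩

/-- `ⁿF₂` is a normal subgroup of `F₂`. -/
instance nF2_normal (n : ℕ) : (nF2 n).Normal := by
  have h : nF2 n = Subgroup.normalClosure (nPowSet n) := by
    rw [nF2, Subgroup.normalClosure, conjugatesOfSet_nPowSet]
  rw [h]
  exact Subgroup.normalClosure_normal

/-- Let `n > 1` and `G = F₂/ⁿF₂`. For every `k ≥ 1` and every tuple `(g₁,…,g_k)` of elements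
of `G` that generates `G`, some `gᵢ` satisfies `gᵢⁿ = 1`; consequently there is a non-trivial
word `w ∈ F_k` of length at most `n` with `w(g₁,…,g_k) = 1`, i.e. the girth of `G` with respect
to every finite generating set is at most `n`. -/
theorem nF2_quotient_girth (n : ℕ) (hn : 1 < n) (k : ℕ) (hk : 1 ≤ k)
    (g : Fin k → FreeGroup (Fin 2) ⧸ nF2 n)
    (hgen : Subgroup.closure (Set.range g) = ⊤) :
    (∃ i : Fin k, g i ^ n = 1) ∧
      ∃ w : FreeGroup (Fin k), w ≠ 1 ∧ w.toWord.length ≤ n ∧ FreeGroup.lift g w = 1 := by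

  -- the mod-n exponent sum homomorphisms on the quotient
  classical
  have key : ∃ i : Fin k, g i ^ n = 1 := by
    obtain ⟨w, hw⟩ := Classical.axiomOfChoice (fun i : Fin k => QuotientGroup.mk_surjective (g i))
    by_contra hcon
    push_neg at hcon
    -- each lift has both exponent sums divisible by n
    have hdvd : ∀ i : Fin k, ((n : ℤ) ∣ (expSum 0 (w i)).toAdd) ∧ ((n : ℤ) ∣ (expSum 1 (w i)).toAdd) := by
      intro i
      by_contra h
      rw [not_and_or] at h
      have hmem : (w i) ^ n ∈ nF2 n := Subgroup.subset_closure ⟨w i, h, rfl⟩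
      exact hcon i (by rw [← hw i, ← QuotientGroup.mk_pow, QuotientGroup.eq_one_iff]; exact hmem)
    -- descend the mod-n exponent sum to the quotient
    haveI : Fact (1 < n) := ⟨hn⟩
    let c : Multiplicative ℤ →* Multiplicative (ZMod n) :=
      AddMonoidHom.toMultiplicative (Int.castAddHom (ZMod n))
    let φ : FreeGroup (Fin 2) →* Multiplicative (ZMod n) := c.comp (expSum 0)
    have hker : nF2 n ≤ φ.ker := by
      rw [nF2, Subgroup.closure_le]
      rintro x ⟨v, -, rfl⟩
      have hall : ∀ x : Multiplicative (ZMod n), x ^ n = 1 := by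
        intro x
        show Multiplicative.ofAdd (n • x.toAdd) = 1
        simp [nsmul_eq_mul, ZMod.natCast_self]
      exact SetLike.mem_coe.mpr (MonoidHom.mem_ker.mpr (by rw [map_pow]; exact hall _))
    let φbar : (FreeGroup (Fin 2) ⧸ nF2 n) →* Multiplicative (ZMod n) := QuotientGroup.lift _ φ hker
    have htriv : ∀ x : FreeGroup (Fin 2) ⧸ nF2 n, φbar x = 1 := by
      intro x
      have hx : x ∈ Subgroup.closure (Set.range g) := hgen ▸ Subgroup.mem_top x
      refine Subgroup.closure_induction ?_ (map_one φbar) ?_ ?_ hx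
      · rintro y ⟨i, rfl⟩
        rw [← hw i]
        show Multiplicative.ofAdd (((expSum 0 (w i)).toAdd : ℤ) : ZMod n) = 1
        obtain ⟨m, hm⟩ := (hdvd i).1
        simp [hm]
      · intro x y _ _ hx hy; rw [map_mul, hx, hy, mul_one]
      · intro x _ hx; rw [map_inv, hx, inv_one]
    have h1 : φbar (QuotientGroup.mk (FreeGroup.of 0)) = Multiplicative.ofAdd ((1 : ℤ) : ZMod n) := by
      show Multiplicative.ofAdd (((expSum 0 (FreeGroup.of 0)).toAdd : ℤ) : ZMod n) = _
      rw [expSum, FreeGroup.lift_apply_of]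
      simp
    rw [htriv] at h1
    have h2 : ((1 : ℤ) : ZMod n) = 0 := by
      have := congrArg Multiplicative.toAdd h1.symm
      simpa using this
    have h3 : (1 : ZMod n) = 0 := by simpa using h2
    exact one_ne_zero h3
  obtain ⟨i, hi⟩ := key
  refine ⟨⟨i, hi⟩, FreeGroup.of i ^ n, ?_, ?_, ?_⟩
  · intro h
    have := congrArg (fun x => x.toWord.length) h
    simp [FreeGroup.toWord_of_pow] at this
    omega
  · rw [FreeGroup.toWord_of_pow, List.length_replicate]
  · rw [map_pow, FreeGroup.lift_apply_of, hi]
end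

section
/- Let n > 1 be an integer and let G = F₂/ⁿF₂. The commutator u = [x₁ⁿ, x₂ⁿ] is a non-trivial element of the free group F₂ on x₁, x₂, and u is a 2-almost identity of G: for every pair (g₁,g₂) of elements generating G one has [g₁ⁿ, g₂ⁿ] = 1 in G. -/
open Matrix Matrix.SpecialLinearGroup in
/-- The matrix `T' = [[1, 0], [1, 1]]` as an element of `SL(2, ℤ)`. -/
def T' : Matrix.SpecialLinearGroup (Fin 2) ℤ :=
  ⟨!![1, 0; 1, 1], by norm_num [Matrix.det_fin_two_of]⟩

open Matrix Matrix.SpecialLinearGroup in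
lemma coe_T_pow' (n : ℕ) : ((ModularGroup.T ^ n : Matrix.SpecialLinearGroup (Fin 2) ℤ) :
    Matrix (Fin 2) (Fin 2) ℤ) = !![1, (n : ℤ); 0, 1] := by
  rw [← zpow_natCast]
  exact ModularGroup.coe_T_zpow n

open Matrix Matrix.SpecialLinearGroup in
lemma coe_T'_pow (n : ℕ) : ((T' ^ n : Matrix.SpecialLinearGroup (Fin 2) ℤ) :
    Matrix (Fin 2) (Fin 2) ℤ) = !![1, 0; (n : ℤ), 1] := by
  induction n with
  | zero => simp [Matrix.one_fin_two]
  | succ k ih =>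
    rw [pow_succ, Matrix.SpecialLinearGroup.coe_mul, ih]
    show _ * (T' : Matrix (Fin 2) (Fin 2) ℤ) = _
    rw [show (T' : Matrix (Fin 2) (Fin 2) ℤ) = !![1, 0; 1, 1] from rfl, Matrix.mul_fin_two]
    push_cast
    ring_nf

/-- The reduction of `expSum 0` modulo `n`, as a hom to `Multiplicative (ZMod n)`. -/
def expSumMod (n : ℕ) : FreeGroup (Fin 2) →* Multiplicative (ZMod n) :=
  (AddMonoidHom.toMultiplicative (Int.castAddHom (ZMod n))).comp (expSum 0)

lemma nF2_le_ker (n : ℕ) : nF2 n ≤ (expSumMod n).ker := by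
  rw [nF2, Subgroup.closure_le]
  rintro x ⟨w, -, rfl⟩
  have h : expSumMod n (w ^ n) = 1 := by
    rw [map_pow]
    apply Multiplicative.toAdd.injective
    rw [toAdd_pow, nsmul_eq_mul, ZMod.natCast_self, zero_mul, toAdd_one]
  exact SetLike.mem_coe.mpr (MonoidHom.mem_ker.mpr h)

open scoped commutatorElement

/-- Let `n > 1` and `G = F₂/ⁿF₂`. The commutator `u = [x₁ⁿ, x₂ⁿ]` is a non-trivial element of
the free group `F₂` on `x₁, x₂`, and `u` is a 2-almost identity of `G`: for every pair
`(g₁, g₂)` of elements generating `G` one has `[g₁ⁿ, g₂ⁿ] = 1` in `G`. -/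
theorem nF2_quotient_almost_identity (n : ℕ) (hn : 1 < n) :
    ⁅(FreeGroup.of (0 : Fin 2)) ^ n, (FreeGroup.of (1 : Fin 2)) ^ n⁆ ≠ 1 ∧
      ∀ g₁ g₂ : FreeGroup (Fin 2) ⧸ nF2 n,
        Subgroup.closure {g₁, g₂} = ⊤ → ⁅g₁ ^ n, g₂ ^ n⁆ = 1 := by
  constructor
  · -- non-triviality: map to SL(2,ℤ) by `a ↦ T`, `b ↦ T'`
    intro h
    have hf := congrArg (FreeGroup.lift ![ModularGroup.T, T']) h
    rw [map_commutatorElement, map_pow, map_pow, map_one] at hf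
    simp only [FreeGroup.lift_apply_of] at hf
    have hcomm : ModularGroup.T ^ n * T' ^ n = T' ^ n * ModularGroup.T ^ n :=
      commutatorElement_eq_one_iff_mul_comm.mp hf
    have hM : ((ModularGroup.T ^ n : _) : Matrix (Fin 2) (Fin 2) ℤ) *
        ((T' ^ n : _) : Matrix (Fin 2) (Fin 2) ℤ) =
        ((T' ^ n : _) : Matrix (Fin 2) (Fin 2) ℤ) *
        ((ModularGroup.T ^ n : _) : Matrix (Fin 2) (Fin 2) ℤ) := by
      rw [← Matrix.SpecialLinearGroup.coe_mul, ← Matrix.SpecialLinearGroup.coe_mul, hcomm]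
    rw [coe_T_pow', coe_T'_pow, Matrix.mul_fin_two, Matrix.mul_fin_two] at hM
    have h00 := congrFun (congrFun hM 0) 0
    simp at h00
    nlinarith [sq_nonneg ((n : ℤ)), hn]
  · intro g₁ g₂ hgen
    obtain ⟨w₁, rfl⟩ := QuotientGroup.mk'_surjective (nF2 n) g₁
    obtain ⟨w₂, rfl⟩ := QuotientGroup.mk'_surjective (nF2 n) g₂
    -- helper: if the condition of `nPowSet` holds for `w`, then `(mk w)^n = 1`
    have key : ∀ w : FreeGroup (Fin 2),
        (¬ (n : ℤ) ∣ (expSum 0 w).toAdd ∨ ¬ (n : ℤ) ∣ (expSum 1 w).toAdd) →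
        (QuotientGroup.mk' (nF2 n) w) ^ n = 1 := by
      intro w hw
      have hmem : w ^ n ∈ (QuotientGroup.mk' (nF2 n)).ker := by
        rw [QuotientGroup.ker_mk']
        exact Subgroup.subset_closure ⟨w, hw, rfl⟩
      rw [← map_pow]
      exact MonoidHom.mem_ker.mp hmem
    by_cases h₁ : (n : ℤ) ∣ (expSum 0 w₁).toAdd
    · by_cases h₂ : (n : ℤ) ∣ (expSum 0 w₂).toAdd
      · -- contradiction: `expSumMod n` would be trivial on a generating set but not on `a`
        exfalso
        have hφ : ∀ w : FreeGroup (Fin 2), (n : ℤ) ∣ (expSum 0 w).toAdd →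
            QuotientGroup.mk' (nF2 n) w ∈
              ((expSumMod n).ker.map (QuotientGroup.mk' (nF2 n)) : Subgroup _) := by
          intro w hw
          refine Subgroup.mem_map.mpr ⟨w, ?_, rfl⟩
          rw [MonoidHom.mem_ker]
          apply Multiplicative.toAdd.injective
          obtain ⟨k, hk⟩ := hw
          have : (expSumMod n w).toAdd = (((expSum 0 w).toAdd : ℤ) : ZMod n) := rfl
          rw [this, hk, toAdd_one]
          push_cast
          rw [ZMod.natCast_self, zero_mul]
        have hle : (Subgroup.closure {QuotientGroup.mk' (nF2 n) w₁,
            QuotientGroup.mk' (nF2 n) w₂} : Subgroup _) ≤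
            (expSumMod n).ker.map (QuotientGroup.mk' (nF2 n)) := by
          rw [Subgroup.closure_le]
          rintro x (rfl | rfl)
          · exact hφ w₁ h₁
          · exact hφ w₂ h₂
        rw [hgen] at hle
        have ha := hle (Subgroup.mem_top (QuotientGroup.mk' (nF2 n) (FreeGroup.of 0)))
        obtain ⟨v, hv, hva⟩ := Subgroup.mem_map.mp ha
        have hva' : v⁻¹ * FreeGroup.of 0 ∈ nF2 n := by
          have h1 : QuotientGroup.mk' (nF2 n) (v⁻¹ * FreeGroup.of 0) = 1 := by
            rw [map_mul, map_inv, ← hva, inv_mul_cancel]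
          rwa [← MonoidHom.mem_ker, QuotientGroup.ker_mk'] at h1
        have hmem : v⁻¹ * FreeGroup.of 0 ∈ (expSumMod n).ker := nF2_le_ker n hva'
        rw [MonoidHom.mem_ker, map_mul, map_inv] at hmem
        rw [MonoidHom.mem_ker] at hv
        rw [hv, inv_one, one_mul] at hmem
        have h1 : (expSumMod n (FreeGroup.of 0)).toAdd = (1 : ZMod n) := by
          have : expSumMod n (FreeGroup.of 0) =
              Multiplicative.ofAdd ((((1 : ℤ)) : ZMod n)) := by
            simp [expSumMod, expSum]
          rw [this]
          push_cast
          rfl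
        rw [hmem, toAdd_one] at h1
        have hdvd : (n : ℕ) ∣ 1 :=
          (ZMod.natCast_eq_zero_iff 1 n).mp (by exact_mod_cast h1.symm)
        have := Nat.le_of_dvd one_pos hdvd
        omega
      · rw [key w₂ (Or.inl h₂), commutatorElement_def, inv_one, mul_one, mul_one,
          mul_inv_cancel]
    · rw [key w₁ (Or.inl h₁), commutatorElement_def, one_mul, inv_one, mul_one,
        mul_inv_cancel]
end
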